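/- Let G be a group such that G ≀ ℤ embeds into G, where G ≀ ℤ = G^{(ℤ)} ⋊ ℤ is the restricted regular wreath product. Define iterated wreath products by W₀ = ℤ and W_{n+1} = W_n ≀ ℤ. Then for every n, the group W_n embeds into G ≀ ℤ, and hence into G. -/
import Mathlib


open Function

/-- The group `G^{(Y)}` of finitely supported functions `Y → G` under pointwise
multiplication, as a subgroup of `Y → G`. -/
def RestrictedPi (Y : Type) (G : Type) [Group G] : Subgroup (Y → G) where
  carrier := {f | (mulSupport f).Finite}
  one_mem' := by
    show (mulSupport (1 : Y → G)).Finite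
    simp
  mul_mem' := fun {a b} ha hb => Set.Finite.subset (ha.union hb) (mulSupport_mul a b)
  inv_mem' := fun {a} ha => by
    show (mulSupport (a⁻¹ : Y → G)).Finite
    refine Set.Finite.subset ha fun x hx => ?_
    simp only [mem_mulSupport, Pi.inv_apply, ne_eq, inv_eq_one] at hx ⊢
    exact hx

/-- The shift automorphism `f ↦ (y ↦ f (y + c))` of `G^{(ℤ)}`. -/
def shiftEquiv (G : Type) [Group G] (c : ℤ) : RestrictedPi ℤ G ≃* RestrictedPi ℤ G where
  toFun f := ⟨fun y => (f : ℤ → G) (y + c), by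
    show (mulSupport fun y => (f : ℤ → G) (y + c)).Finite
    have heq : (fun y => (f : ℤ → G) (y + c)) = (f : ℤ → G) ∘ (fun y => y + c) := rfl
    rw [heq, mulSupport_comp_eq_preimage]
    exact Set.Finite.preimage ((add_left_injective c).injOn) f.2⟩
  invFun f := ⟨fun y => (f : ℤ → G) (y - c), by
    show (mulSupport fun y => (f : ℤ → G) (y - c)).Finite
    have heq : (fun y => (f : ℤ → G) (y - c)) = (f : ℤ → G) ∘ (fun y => y - c) := rfl
    rw [heq, mulSupport_comp_eq_preimage]
    exact Set.Finite.preimage ((sub_left_injective (G := ℤ)).injOn) f.2⟩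
  left_inv f := Subtype.ext (funext fun y => by simp)
  right_inv f := Subtype.ext (funext fun y => by simp)
  map_mul' f g := rfl

/-- The action of `ℤ` on `G^{(ℤ)}` by shifting the argument. -/
def shiftHom (G : Type) [Group G] : Multiplicative ℤ →* MulAut (RestrictedPi ℤ G) where
  toFun c := shiftEquiv G c.toAdd
  map_one' := MulEquiv.ext fun f => Subtype.ext (funext fun y => by
    simp [shiftEquiv])
  map_mul' a b := MulEquiv.ext fun f => Subtype.ext (funext fun y => by
    simp [shiftEquiv, add_assoc])

/-- The restricted regular wreath product `G ≀ ℤ = G^{(ℤ)} ⋊ ℤ`, with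
multiplication `(f₁, h₁)(f₂, h₂) = (y ↦ f₁ y * f₂ (y + h₁), h₁ + h₂)`. -/
abbrev WrZ (G : Type) [Group G] : Type :=
  SemidirectProduct (RestrictedPi ℤ G) (Multiplicative ℤ) (shiftHom G)

/-- The iterated wreath products `W₀ = ℤ`, `W_{n+1} = W_n ≀ ℤ`, bundled with their
group structures. -/
def WAux : ℕ → (T : Type) × Group T
  | 0 => ⟨Multiplicative ℤ, inferInstance⟩
  | n + 1 =>
    letI := (WAux n).2
    ⟨WrZ (WAux n).1, inferInstance⟩

instance instGroupWAux (n : ℕ) : Group (WAux n).1 := (WAux n).2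

/-- Functoriality of `RestrictedPi` in the group. -/
def piMap {H G : Type} [Group H] [Group G] (φ : H →* G) :
    RestrictedPi ℤ H →* RestrictedPi ℤ G where
  toFun f := ⟨fun y => φ ((f : ℤ → H) y), by
    refine Set.Finite.subset f.2 fun x hx => ?_
    simp only [mem_mulSupport] at hx ⊢
    intro h; apply hx; rw [h, map_one]⟩
  map_one' := Subtype.ext (funext fun _ => map_one φ)
  map_mul' f g := Subtype.ext (funext fun y => map_mul φ _ _)

theorem piMap_injective {H G : Type} [Group H] [Group G] {φ : H →* G}
    (hφ : Function.Injective φ) : Function.Injective (piMap φ) := by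
  intro f g hfg
  apply Subtype.ext; funext y
  exact hφ (congrFun (congrArg Subtype.val hfg) y)

/-- Functoriality of `WrZ` in the group. -/
def wrMap {H G : Type} [Group H] [Group G] (φ : H →* G) : WrZ H →* WrZ G :=
  SemidirectProduct.map (piMap φ) (MonoidHom.id _) (fun _ => rfl)

theorem wrMap_injective {H G : Type} [Group H] [Group G] {φ : H →* G}
    (hφ : Function.Injective φ) : Function.Injective (wrMap φ) := by
  intro x y hxy
  ext1
  · exact piMap_injective hφ (congrArg (fun z => z.left) hxy)
  · exact congrArg (fun z => z.right) hxy

/-- If `G ≀ ℤ` embeds into `G`, then every iterated wreath product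
`W_n = ℤ ≀ ⋯ ≀ ℤ` embeds into `G ≀ ℤ`, and hence into `G`. -/
theorem stmt_12 (G : Type) [Group G]
    (h : ∃ φ : WrZ G →* G, Function.Injective φ) (n : ℕ) :
    (∃ ψ : (WAux n).1 →* WrZ G, Function.Injective ψ) ∧
    (∃ ψ : (WAux n).1 →* G, Function.Injective ψ) := by
  induction n with
  | zero =>
    refine ⟨⟨SemidirectProduct.inr, SemidirectProduct.inr_injective⟩, ?_⟩
    obtain ⟨φ, hφ⟩ := h
    exact ⟨φ.comp SemidirectProduct.inr, hφ.comp SemidirectProduct.inr_injective⟩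
  | succ n ih =>
    obtain ⟨φ, hφ⟩ := h
    obtain ⟨⟨ψ, hψ⟩, _⟩ := ih
    have hψG : Function.Injective (φ.comp ψ) := hφ.comp hψ
    refine ⟨⟨wrMap (φ.comp ψ), wrMap_injective hψG⟩, ?_⟩
    exact ⟨φ.comp (wrMap (φ.comp ψ)), hφ.comp (wrMap_injective hψG)⟩
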